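/- For integers j ≥ 0 define a_j and b_j by: a_{2r} = ∑_{i=0}^r (2i+1), a_{2r+1} = ∑_{i=0}^r (2i+2), b_{2r} = ∑_{i=0}^r (−1)^{r+1−i}(2i+1), b_{2r+1} = ∑_{i=0}^r (−1)^{r+1−i}(2i+2). Then for every integer h ≥ 2, (h−2)·2^{2h−3} − ∑_{j=0}^{h−2} binom(2h+2, h−2−j) · (a_j − b_j)/2 = −2^{h−2}. -/

import Mathlib

open Finset

/-- `a_{2r} = ∑_{i=0}^r (2i+1)` and `a_{2r+1} = ∑_{i=0}^r (2i+2)`. -/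
def aSeq (j : ℕ) : ℚ :=
  if j % 2 = 0 then ∑ i ∈ Finset.range (j / 2 + 1), (2 * (i : ℚ) + 1)
  else ∑ i ∈ Finset.range (j / 2 + 1), (2 * (i : ℚ) + 2)

/-- `b_{2r} = ∑_{i=0}^r (-1)^{r+1-i}(2i+1)` and `b_{2r+1} = ∑_{i=0}^r (-1)^{r+1-i}(2i+2)`. -/
def bSeq (j : ℕ) : ℚ :=
  if j % 2 = 0 then
    ∑ i ∈ Finset.range (j / 2 + 1), (-1 : ℚ) ^ (j / 2 + 1 - i) * (2 * (i : ℚ) + 1)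
  else
    ∑ i ∈ Finset.range (j / 2 + 1), (-1 : ℚ) ^ (j / 2 + 1 - i) * (2 * (i : ℚ) + 2)

def cQ (j : ℕ) : ℚ := (aSeq j - bSeq j) / 2
def dQ (j : ℕ) : ℚ := if j % 4 = 3 then 1 else 0
def oQ (j : ℕ) : ℚ := if j % 2 = 1 then 1 else 0
def Ch (n k : ℕ) : ℚ := (Nat.choose n k : ℚ)

lemma pascalQ (n k : ℕ) : Ch (n+1) (k+1) = Ch n k + Ch n (k+1) := by
  simp [Ch, Nat.choose_succ_succ]

lemma aeven (m : ℕ) : aSeq (2*m) = ((m:ℚ)+1)^2 := by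
  have h1 : (2*m) % 2 = 0 := by omega
  have h2 : (2*m) / 2 = m := by omega
  rw [aSeq, if_pos h1, h2]
  clear h1 h2
  induction m with
  | zero => simp
  | succ k ih => rw [Finset.sum_range_succ, ih]; push_cast; ring

lemma aodd (m : ℕ) : aSeq (2*m+1) = ((m:ℚ)+1)*((m:ℚ)+2) := by
  have h1 : ¬ (2*m+1) % 2 = 0 := by omega
  have h2 : (2*m+1) / 2 = m := by omega
  rw [aSeq, if_neg h1, h2]
  clear h1 h2
  induction m with
  | zero => norm_num
  | succ k ih => rw [Finset.sum_range_succ, ih]; push_cast; ring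

lemma bA_succ (m : ℕ) :
    (∑ i ∈ Finset.range (m+2), (-1 : ℚ) ^ (m+2-i) * (2 * (i : ℚ) + 1))
      = -(∑ i ∈ Finset.range (m+1), (-1 : ℚ) ^ (m+1-i) * (2 * (i : ℚ) + 1)) - (2*(m:ℚ)+3) := by
  rw [Finset.sum_range_succ]
  have h : ∀ i ∈ Finset.range (m+1),
      (-1 : ℚ) ^ (m+2-i) * (2 * (i : ℚ) + 1)
        = -((-1 : ℚ) ^ (m+1-i) * (2 * (i : ℚ) + 1)) := by
    intro i hi
    have hi' : i ≤ m := by simpa [Nat.lt_succ_iff] using hi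
    rw [show m+2-i = (m+1-i)+1 by omega, pow_succ]
    ring
  rw [Finset.sum_congr rfl h]
  rw [Finset.sum_neg_distrib]
  push_cast
  rw [show m+1-m = 1 by omega]
  ring

lemma beven (m : ℕ) : bSeq (2*m) = -((m:ℚ)+1) := by
  have h1 : (2*m) % 2 = 0 := by omega
  have h2 : (2*m) / 2 = m := by omega
  rw [bSeq, if_pos h1, h2]
  clear h1 h2
  induction m with
  | zero => norm_num
  | succ k ih =>
    rw [show k+1+1 = k+2 by omega, bA_succ k, ih]
    push_cast; ring

lemma bB_succ (m : ℕ) :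
    (∑ i ∈ Finset.range (m+2), (-1 : ℚ) ^ (m+2-i) * (2 * (i : ℚ) + 2))
      = -(∑ i ∈ Finset.range (m+1), (-1 : ℚ) ^ (m+1-i) * (2 * (i : ℚ) + 2)) - (2*(m:ℚ)+4) := by
  rw [Finset.sum_range_succ]
  have h : ∀ i ∈ Finset.range (m+1),
      (-1 : ℚ) ^ (m+2-i) * (2 * (i : ℚ) + 2)
        = -((-1 : ℚ) ^ (m+1-i) * (2 * (i : ℚ) + 2)) := by
    intro i hi
    have hi' : i ≤ m := by simpa [Nat.lt_succ_iff] using hi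
    rw [show m+2-i = (m+1-i)+1 by omega, pow_succ]
    ring
  rw [Finset.sum_congr rfl h]
  rw [Finset.sum_neg_distrib]
  push_cast
  rw [show m+1-m = 1 by omega]
  ring

lemma bodd (m : ℕ) : bSeq (2*m+1) = if m % 2 = 0 then -((m:ℚ)+2) else -((m:ℚ)+1) := by
  have h1 : ¬ (2*m+1) % 2 = 0 := by omega
  have h2 : (2*m+1) / 2 = m := by omega
  rw [bSeq, if_neg h1, h2]
  clear h1 h2
  induction m with
  | zero => norm_num
  | succ k ih =>
    rw [show k+1+1 = k+2 by omega, bB_succ k, ih]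
    rcases Nat.even_or_odd k with hk | hk
    · have e1 : k % 2 = 0 := Nat.even_iff.mp hk
      have e2 : ¬ (k+1) % 2 = 0 := by omega
      rw [if_pos e1, if_neg e2]
      push_cast; ring
    · have e1 : ¬ k % 2 = 0 := by
        have := Nat.odd_iff.mp hk; omega
      have e2 : (k+1) % 2 = 0 := by
        have := Nat.odd_iff.mp hk; omega
      rw [if_neg e1, if_pos e2]
      push_cast; ring

lemma cQ_even (m : ℕ) : cQ (2*m) = ((m:ℚ)+1)*((m:ℚ)+2)/2 := by
  rw [cQ, aeven, beven]; ring

lemma cQ_odd (m : ℕ) : cQ (2*m+1)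
    = (((m:ℚ)+1)*((m:ℚ)+2) + (if m % 2 = 0 then ((m:ℚ)+2) else ((m:ℚ)+1)))/2 := by
  rw [cQ, aodd, bodd]
  split_ifs <;> ring

lemma cQ_zero : cQ 0 = 1 := by
  have := cQ_even 0; norm_num at this; exact this

lemma cQ_one : cQ 1 = 2 := by
  have := cQ_odd 0; norm_num at this; exact this

lemma crec (j : ℕ) : cQ (j+2) + cQ j = 2 * cQ (j+1) + dQ (j+1) := by
  obtain ⟨q, r, hr, rfl⟩ : ∃ q r, r < 4 ∧ j = 4*q + r :=
    ⟨j/4, j%4, Nat.mod_lt _ (by norm_num), (Nat.div_add_mod j 4).symm⟩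
  interval_cases r
  · rw [show 4*q+0+2 = 2*(2*q+1) by ring, show 4*q+0 = 2*(2*q) by ring,
      cQ_even, cQ_even, cQ_odd,
      dQ, if_neg (by omega : ¬ (2*(2*q)+1) % 4 = 3), if_pos (by omega : (2*q) % 2 = 0)]
    push_cast; ring
  · rw [show 4*q+1+2 = 2*(2*q+1)+1 by ring, show 4*q+1 = 2*(2*q)+1 by ring,
      show 2*(2*q)+1+1 = 2*(2*q+1) by ring, cQ_odd, cQ_odd, cQ_even,
      dQ, if_neg (by omega : ¬ (2*(2*q+1)) % 4 = 3),
      if_neg (by omega : ¬ (2*q+1) % 2 = 0), if_pos (by omega : (2*q) % 2 = 0)]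
    push_cast; ring
  · rw [show 4*q+2+2 = 2*(2*q+2) by ring, show 4*q+2 = 2*(2*q+1) by ring,
      cQ_even, cQ_even, cQ_odd,
      dQ, if_pos (by omega : (2*(2*q+1)+1) % 4 = 3),
      if_neg (by omega : ¬ (2*q+1) % 2 = 0)]
    push_cast; ring
  · rw [show 4*q+3+2 = 2*(2*q+2)+1 by ring, show 4*q+3 = 2*(2*q+1)+1 by ring,
      show 2*(2*q+1)+1+1 = 2*(2*q+2) by ring, cQ_odd, cQ_odd, cQ_even,
      dQ, if_neg (by omega : ¬ (2*(2*q+2)) % 4 = 3),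
      if_pos (by omega : (2*q+2) % 2 = 0), if_neg (by omega : ¬ (2*q+1) % 2 = 0)]
    push_cast; ring

lemma dQ_zero : dQ 0 = 0 := by norm_num [dQ]
lemma dQ_one : dQ 1 = 0 := by norm_num [dQ]

lemma drec (j : ℕ) : dQ (j+2) + dQ j = oQ j := by
  simp only [dQ, oQ]
  split_ifs <;> first | omega | norm_num

lemma oQ_succ (j : ℕ) : oQ (j+1) = 1 - oQ j := by
  simp only [oQ]
  split_ifs <;> first | omega | norm_num

lemma oQ_alt (j : ℕ) : oQ j = (1 - (-1:ℚ)^j)/2 := by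
  rcases Nat.even_or_odd j with hj | hj
  · rw [oQ, if_neg (by simpa using Nat.even_iff.mp hj), hj.neg_one_pow]
    norm_num
  · rw [oQ, if_pos (Nat.odd_iff.mp hj), hj.neg_one_pow]
    norm_num

lemma neg_pow_sub (m k : ℕ) (hk : k ≤ m) : (-1:ℚ)^(m-k) = (-1)^m * (-1)^k := by
  obtain ⟨d, rfl⟩ := Nat.exists_eq_add_of_le hk
  rw [Nat.add_sub_cancel_left]
  have h2 : (-1:ℚ)^k * (-1)^k = 1 := by
    rw [← pow_add, ← two_mul, pow_mul]; norm_num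
  rw [pow_add]
  linear_combination (-((-1:ℚ)^d)) * h2

lemma altsum (n : ℕ) : ∀ t, ∑ k ∈ Finset.range (t+1), (-1:ℚ)^k * Ch (n+1) k = (-1)^t * Ch n t := by
  intro t
  induction t with
  | zero => simp [Ch]
  | succ s ih =>
    rw [Finset.sum_range_succ, ih, pascalQ, pow_succ]
    ring

lemma sumPascal (n N : ℕ) (f : ℕ → ℚ) :
    ∑ k ∈ Finset.range (N+1), Ch (n+1) k * f k
      = f 0 + ∑ k ∈ Finset.range N, (Ch n k + Ch n (k+1)) * f (k+1) := by
  rw [Finset.sum_range_succ']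
  simp only [pascalQ]
  rw [show Ch (n+1) 0 = 1 from by simp [Ch]]
  ring

lemma rowSplit (n N : ℕ) :
    ∑ k ∈ Finset.range (N+1), Ch (n+1) k
      = (∑ k ∈ Finset.range (N+1), Ch n k) + ∑ k ∈ Finset.range N, Ch n k := by
  rw [Finset.sum_range_succ']
  simp only [pascalQ]
  rw [Finset.sum_add_distrib]
  rw [show Ch (n+1) 0 = Ch n 0 from by simp [Ch]]
  have h := Finset.sum_range_succ' (fun k => Ch n k) N
  linarith

lemma halfwayQ (l : ℕ) : ∑ k ∈ Finset.range (l+4), Ch (2*l+7) k = 4^(l+3) := by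
  have h := Nat.sum_range_choose_halfway (l+3)
  have h2 : ((∑ i ∈ Finset.range (l+3+1), (2*(l+3)+1).choose i : ℕ) : ℚ) = ((4^(l+3) : ℕ) : ℚ) := by
    exact Nat.cast_inj.mpr h
  push_cast at h2
  rw [show l+4 = l+3+1 by omega, show 2*l+7 = 2*(l+3)+1 by ring]
  simpa [Ch] using h2

lemma Asum (l : ℕ) :
    ∑ k ∈ Finset.range (l+1), Ch (2*l+8) k
      = 2 * 4^(l+3) - 2*Ch (2*l+7) (l+3) - 2*Ch (2*l+7) (l+2)
        - 2*Ch (2*l+7) (l+1) - Ch (2*l+7) l := by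
  have h1 : ∑ k ∈ Finset.range (l+1), Ch (2*l+8) k
      = (∑ k ∈ Finset.range (l+1), Ch (2*l+7) k) + ∑ k ∈ Finset.range l, Ch (2*l+7) k := by
    rw [show 2*l+8 = (2*l+7)+1 by ring]
    exact rowSplit _ _
  have p3 : ∑ k ∈ Finset.range (l+4), Ch (2*l+7) k
      = ∑ k ∈ Finset.range (l+3), Ch (2*l+7) k + Ch (2*l+7) (l+3) := by
    rw [show l+4 = (l+3)+1 by omega, Finset.sum_range_succ]
  have p2 : ∑ k ∈ Finset.range (l+3), Ch (2*l+7) k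
      = ∑ k ∈ Finset.range (l+2), Ch (2*l+7) k + Ch (2*l+7) (l+2) := by
    rw [show l+3 = (l+2)+1 by omega, Finset.sum_range_succ]
  have p1 : ∑ k ∈ Finset.range (l+2), Ch (2*l+7) k
      = ∑ k ∈ Finset.range (l+1), Ch (2*l+7) k + Ch (2*l+7) (l+1) := by
    rw [show l+2 = (l+1)+1 by omega, Finset.sum_range_succ]
  have p0 : ∑ k ∈ Finset.range (l+1), Ch (2*l+7) k
      = ∑ k ∈ Finset.range l, Ch (2*l+7) k + Ch (2*l+7) l := Finset.sum_range_succ _ _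
  have hh := halfwayQ l
  linarith

lemma stepSum (w : ℕ → ℚ) (m : ℕ) :
    ∑ k ∈ Finset.range (m+2), Ch (2*m+8) k * w (m+1-k)
      = 2 * (∑ k ∈ Finset.range (m+1), Ch (2*m+6) k * w (m-k))
        + Ch (2*m+6) (m+1) * w 0
        + (∑ k ∈ Finset.range m, Ch (2*m+6) k * w (m-1-k))
        + (∑ k ∈ Finset.range m, Ch (2*m+6) k * w (m+1-k))
        + Ch (2*m+6) m * w 1 := by
  have F1 : ∑ k ∈ Finset.range (m+2), Ch (2*m+8) k * w (m+1-k)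
      = w (m+1) + (∑ k ∈ Finset.range (m+1), Ch (2*m+7) k * w (m-k))
        + (∑ k ∈ Finset.range (m+1), Ch (2*m+7) (k+1) * w (m-k)) := by
    rw [show m+2 = (m+1)+1 by omega, show 2*m+8 = (2*m+7)+1 by ring,
        sumPascal (2*m+7) (m+1) (fun k => w (m+1-k))]
    simp only [Nat.sub_zero, show ∀ k:ℕ, m+1-(k+1) = m-k from fun k => by omega, add_mul]
    rw [Finset.sum_add_distrib]
    ring
  have F2 : ∑ k ∈ Finset.range (m+1), Ch (2*m+7) k * w (m-k)
      = w m + (∑ k ∈ Finset.range m, Ch (2*m+6) k * w (m-1-k))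
        + (∑ k ∈ Finset.range m, Ch (2*m+6) (k+1) * w (m-1-k)) := by
    rw [show 2*m+7 = (2*m+6)+1 by ring, sumPascal (2*m+6) m (fun k => w (m-k))]
    have hc : ∑ k ∈ Finset.range m, (Ch (2*m+6) k + Ch (2*m+6) (k+1)) * w (m-(k+1))
        = ∑ k ∈ Finset.range m,
            (Ch (2*m+6) k * w (m-1-k) + Ch (2*m+6) (k+1) * w (m-1-k)) :=
      Finset.sum_congr rfl (fun k hk => by rw [show m-(k+1) = m-1-k from by omega]; ring)
    rw [hc, Finset.sum_add_distrib, Nat.sub_zero]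
    ring
  have F3 : ∑ k ∈ Finset.range (m+1), Ch (2*m+7) (k+1) * w (m-k)
      = (∑ k ∈ Finset.range (m+1), Ch (2*m+6) k * w (m-k))
        + (∑ k ∈ Finset.range (m+1), Ch (2*m+6) (k+1) * w (m-k)) := by
    rw [show 2*m+7 = (2*m+6)+1 by ring]
    simp only [pascalQ, add_mul]
    rw [Finset.sum_add_distrib]
  have F4 : ∑ k ∈ Finset.range (m+1), Ch (2*m+6) k * w (m-k)
      = (∑ k ∈ Finset.range m, Ch (2*m+6) (k+1) * w (m-1-k)) + w m := by
    rw [Finset.sum_range_succ']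
    have hc : ∑ k ∈ Finset.range m, Ch (2*m+6) (k+1) * w (m-(k+1))
        = ∑ k ∈ Finset.range m, Ch (2*m+6) (k+1) * w (m-1-k) :=
      Finset.sum_congr rfl (fun k hk => by rw [show m-(k+1) = m-1-k from by omega])
    rw [hc, Nat.sub_zero, show Ch (2*m+6) 0 = 1 from by simp [Ch]]
    ring
  have F5 : ∑ k ∈ Finset.range (m+2), Ch (2*m+6) k * w (m+1-k)
      = (∑ k ∈ Finset.range (m+1), Ch (2*m+6) (k+1) * w (m-k)) + w (m+1) := by
    rw [show m+2 = (m+1)+1 by omega, Finset.sum_range_succ']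
    simp only [show ∀ k:ℕ, m+1-(k+1) = m-k from fun k => by omega, Nat.sub_zero]
    rw [show Ch (2*m+6) 0 = 1 from by simp [Ch]]
    ring
  have F6 : ∑ k ∈ Finset.range (m+2), Ch (2*m+6) k * w (m+1-k)
      = (∑ k ∈ Finset.range (m+1), Ch (2*m+6) k * w (m+1-k)) + Ch (2*m+6) (m+1) * w 0 := by
    rw [show m+2 = (m+1)+1 by omega, Finset.sum_range_succ]
    simp only [show m+1-(m+1) = 0 from by omega]
  have F7 : ∑ k ∈ Finset.range (m+1), Ch (2*m+6) k * w (m+1-k)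
      = (∑ k ∈ Finset.range m, Ch (2*m+6) k * w (m+1-k)) + Ch (2*m+6) m * w 1 := by
    rw [Finset.sum_range_succ]
    simp only [show m+1-m = 1 from by omega]
  rw [F1, F2, F3]
  linarith [F4, F5, F6, F7]

def Tm (m : ℕ) : ℚ := ∑ k ∈ Finset.range (m+1), Ch (2*m+6) k * cQ (m-k)
def Dm (m : ℕ) : ℚ := ∑ k ∈ Finset.range (m+1), Ch (2*m+6) k * dQ (m-k)

lemma Trec (m : ℕ) : Tm (m+1) = 4 * Tm m + Dm m + Ch (2*m+6) (m+1) := by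
  have hs := stepSum cQ m
  have hT1 : Tm (m+1) = ∑ k ∈ Finset.range (m+2), Ch (2*m+8) k * cQ (m+1-k) := by
    rw [Tm, show 2*(m+1)+6 = 2*m+8 by ring, show m+1+1 = m+2 by omega]
  have hpair : (∑ k ∈ Finset.range m, Ch (2*m+6) k * cQ (m-1-k))
      + (∑ k ∈ Finset.range m, Ch (2*m+6) k * cQ (m+1-k))
      = 2 * (∑ k ∈ Finset.range m, Ch (2*m+6) k * cQ (m-k))
        + ∑ k ∈ Finset.range m, Ch (2*m+6) k * dQ (m-k) := by
    rw [← Finset.sum_add_distrib, Finset.mul_sum, ← Finset.sum_add_distrib]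
    apply Finset.sum_congr rfl
    intro k hk
    have hk' : k < m := Finset.mem_range.mp hk
    have hc := crec (m-1-k)
    rw [show m+1-k = (m-1-k)+2 by omega, show m-k = (m-1-k)+1 by omega]
    linear_combination (Ch (2*m+6) k) * hc
  have hsc : ∑ k ∈ Finset.range (m+1), Ch (2*m+6) k * cQ (m-k)
      = (∑ k ∈ Finset.range m, Ch (2*m+6) k * cQ (m-k)) + Ch (2*m+6) m := by
    rw [Finset.sum_range_succ, show m-m = 0 by omega, cQ_zero, mul_one]
  have hsd : ∑ k ∈ Finset.range (m+1), Ch (2*m+6) k * dQ (m-k)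
      = ∑ k ∈ Finset.range m, Ch (2*m+6) k * dQ (m-k) := by
    rw [Finset.sum_range_succ, show m-m = 0 by omega, dQ_zero, mul_zero, add_zero]
  rw [hT1, hs, cQ_zero, cQ_one]
  simp only [Tm, Dm]
  linarith [hpair, hsc, hsd]

lemma Drec (l : ℕ) : Dm (l+2) = 2 * Dm (l+1)
    + (∑ k ∈ Finset.range (l+1), Ch (2*l+8) k)/2 - Ch (2*l+7) l / 2 := by
  have hs := stepSum dQ (l+1)
  have hD1 : Dm (l+2) = ∑ k ∈ Finset.range ((l+1)+2), Ch (2*(l+1)+8) k * dQ ((l+1)+1-k) := by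
    rw [Dm, show l+2+1 = (l+1)+2 by omega, show 2*(l+2)+6 = 2*(l+1)+8 by ring]
  have hpair : (∑ k ∈ Finset.range (l+1), Ch (2*(l+1)+6) k * dQ (l+1-1-k))
      + (∑ k ∈ Finset.range (l+1), Ch (2*(l+1)+6) k * dQ (l+1+1-k))
      = (∑ k ∈ Finset.range (l+1), Ch (2*l+8) k)/2 - Ch (2*l+7) l / 2 := by
    have h1 : (∑ k ∈ Finset.range (l+1), Ch (2*(l+1)+6) k * dQ (l+1-1-k))
        + (∑ k ∈ Finset.range (l+1), Ch (2*(l+1)+6) k * dQ (l+1+1-k))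
        = ∑ k ∈ Finset.range (l+1), Ch (2*l+8) k * (1 - oQ (l+1-k)) := by
      rw [← Finset.sum_add_distrib]
      apply Finset.sum_congr rfl
      intro k hk
      have hk' : k < l+1 := Finset.mem_range.mp hk
      have hd := drec (l-k)
      have ho := oQ_succ (l-k)
      rw [show 2*(l+1)+6 = 2*l+8 by ring, show l+1-1-k = l-k by omega,
        show l+1+1-k = (l-k)+2 by omega, show l+1-k = (l-k)+1 by omega, ho]
      linear_combination (Ch (2*l+8) k) * hd
    have h2 : ∑ k ∈ Finset.range (l+1), Ch (2*l+8) k * (1 - oQ (l+1-k))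
        = ∑ k ∈ Finset.range (l+1),
            (Ch (2*l+8) k / 2 + ((-1:ℚ)^(l+1)/2) * ((-1:ℚ)^k * Ch (2*l+8) k)) := by
      apply Finset.sum_congr rfl
      intro k hk
      have hk' : k ≤ l+1 := by have := Finset.mem_range.mp hk; omega
      rw [oQ_alt, neg_pow_sub (l+1) k hk']
      ring
    have h3 : ∑ k ∈ Finset.range (l+1),
          (Ch (2*l+8) k / 2 + ((-1:ℚ)^(l+1)/2) * ((-1:ℚ)^k * Ch (2*l+8) k))
        = (∑ k ∈ Finset.range (l+1), Ch (2*l+8) k)/2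
          + ((-1:ℚ)^(l+1)/2) * ∑ k ∈ Finset.range (l+1), (-1:ℚ)^k * Ch (2*l+8) k := by
      rw [Finset.sum_add_distrib, ← Finset.sum_div, ← Finset.mul_sum]
    have h4 : ∑ k ∈ Finset.range (l+1), (-1:ℚ)^k * Ch (2*l+8) k = (-1:ℚ)^l * Ch (2*l+7) l := by
      have := altsum (2*l+7) l
      rw [show (2*l+7)+1 = 2*l+8 by ring] at this
      exact this
    have h5 : (-1:ℚ)^(l+1) * (-1:ℚ)^l = -1 := by
      have hll : (-1:ℚ)^l * (-1:ℚ)^l = 1 := by rw [← pow_add, ← two_mul, pow_mul]; norm_num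
      rw [pow_succ]
      linear_combination (-1 : ℚ) * hll
    rw [h1, h2, h3, h4]
    linear_combination (Ch (2*l+7) l / 2) * h5
  rw [hD1, hs, dQ_zero, dQ_one, Dm]
  linarith [hpair]

lemma Dclosed : ∀ m, Dm m = 2^(2*m+3) - 2^(m+1) - Ch (2*m+6) (m+1) := by
  intro m
  induction m with
  | zero =>
    norm_num [Dm, dQ, Ch, Finset.sum_range_one, Nat.choose_one_right]
  | succ l ihl =>
    cases l with
    | zero =>
      norm_num [Dm, dQ, Ch, Finset.sum_range_succ, Finset.sum_range_one]
      rw [show Nat.choose 8 2 = 28 from rfl]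
      norm_num
    | succ l =>
      have q1 : Ch (2*l+10) (l+3) = Ch (2*l+9) (l+2) + Ch (2*l+9) (l+3) := by
        rw [show 2*l+10 = 2*l+9+1 by ring]; exact pascalQ _ _
      have q2 : Ch (2*l+9) (l+2) = Ch (2*l+8) (l+1) + Ch (2*l+8) (l+2) := by
        rw [show 2*l+9 = 2*l+8+1 by ring]; exact pascalQ _ _
      have q3 : Ch (2*l+9) (l+3) = Ch (2*l+8) (l+2) + Ch (2*l+8) (l+3) := by
        rw [show 2*l+9 = 2*l+8+1 by ring]; exact pascalQ _ _
      have q4 : Ch (2*l+8) (l+3) = Ch (2*l+7) (l+2) + Ch (2*l+7) (l+3) := by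
        rw [show 2*l+8 = 2*l+7+1 by ring]; exact pascalQ _ _
      have q5 : Ch (2*l+8) (l+1) = Ch (2*l+7) l + Ch (2*l+7) (l+1) := by
        rw [show 2*l+8 = 2*l+7+1 by ring]; exact pascalQ _ _
      have hpow : (4:ℚ)^(l+3) = 2^(2*l+6) := by
        rw [show (4:ℚ) = 2^2 by norm_num, ← pow_mul]
        ring_nf
      have hstep := Drec l
      rw [show l+1+1 = l+2 by omega] at *
      rw [hstep, ihl, Asum l]
      rw [show 2*(l+2)+6 = 2*l+10 by ring, show l+2+1 = l+3 by omega,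
        show 2*(l+1)+6 = 2*l+8 by ring]
      linear_combination q1 + q2 + q3 + q4 + q5 + hpow

lemma Tclosed : ∀ m, Tm m = (m:ℚ)*2^(2*m+1) + 2^m := by
  intro m
  induction m with
  | zero =>
    norm_num [Tm, Ch, Finset.sum_range_one]
    have := cQ_zero
    norm_num [this]
  | succ m ih =>
    rw [Trec, ih, Dclosed]
    push_cast
    ring

/-- For every `h ≥ 2`,
`(h-2)·2^{2h-3} - ∑_{j=0}^{h-2} binom(2h+2, h-2-j)·(a_j - b_j)/2 = -2^{h-2}`. -/
theorem stmt_11 (h : ℕ) (hh : 2 ≤ h) :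
    ((h : ℚ) - 2) * 2 ^ (2 * h - 3)
      - ∑ j ∈ Finset.range (h - 1),
          (Nat.choose (2 * h + 2) (h - 2 - j) : ℚ) * ((aSeq j - bSeq j) / 2)
      = -(2 : ℚ) ^ (h - 2) := by
  obtain ⟨m, rfl⟩ : ∃ m, h = m + 2 := ⟨h - 2, by omega⟩
  have h1 : ∑ j ∈ Finset.range (m+1),
        (Nat.choose (2 * (m+2) + 2) (m+2-2-j) : ℚ) * ((aSeq j - bSeq j) / 2)
      = ∑ j ∈ Finset.range (m+1), Ch (2*m+6) (m-j) * cQ j := by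
    apply Finset.sum_congr rfl
    intro j hj
    rw [show 2*(m+2)+2 = 2*m+6 by ring, show m+2-2-j = m-j by omega]
    rfl
  have h2 : ∑ j ∈ Finset.range (m+1), Ch (2*m+6) (m-j) * cQ j = Tm m := by
    rw [Tm, ← Finset.sum_range_reflect (fun k => Ch (2*m+6) k * cQ (m-k)) (m+1)]
    apply Finset.sum_congr rfl
    intro j hj
    have hjm : j ≤ m := by have := Finset.mem_range.mp hj; omega
    rw [show m+1-1-j = m-j by omega, show m-(m-j) = j by omega]
  rw [show m+2-1 = m+1 by omega, h1, h2, Tclosed m,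
    show 2*(m+2)-3 = 2*m+1 by omega, show m+2-2 = m by omega]
  push_cast
  ring
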